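/- Let M ≥ 2 be an integer and a: ℤ → ℂ a finitely supported mask. For J ∈ ℕ, the mask a has order J sum rules with respect to M (i.e., its symbol ã(z) = ∑_k a(k) z^k is divisible by (1 + z + ⋯ + z^{M−1})^J as a Laurent polynomial) if and only if for every polynomial p of degree less than J and every γ ∈ ℤ, ∑_{k∈ℤ} p(γ + M k) a(γ + M k) = M^{-1} ∑_{k∈ℤ} p(k) a(k). -/

import Mathlib

open Polynomial Finset


private lemma geom_aux {M : ℕ} {x : ℂ} (hx1 : x ≠ 1) (hxM : x ^ M = 1) :
    ∑ i ∈ range M, x ^ i = 0 := by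
  rw [geom_sum_eq hx1 M, hxM]; simp

private lemma taylor_pow_dvd {r : ℂ} {n : ℕ} {p : ℂ[X]} :
    (X - C r) ^ n ∣ p ↔ ∀ j < n, (Polynomial.taylor r p).coeff j = 0 := by
  rw [← Polynomial.X_pow_dvd_iff]
  have hX : (Polynomial.taylorAlgHom r : ℂ[X] →ₐ[ℂ] ℂ[X]) (X - C r) = X := by
    show Polynomial.taylor r (X - C r) = X
    simp [Polynomial.taylorAlgHom, Polynomial.taylor_X, Polynomial.taylor_C]
  constructor
  · rintro ⟨b, rfl⟩
    refine ⟨Polynomial.taylor r b, ?_⟩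
    have : (Polynomial.taylorAlgHom r : ℂ[X] →ₐ[ℂ] ℂ[X]) ((X - C r) ^ n * b)
        = X ^ n * Polynomial.taylor r b := by
      rw [map_mul, map_pow, hX]; rfl
    simpa [Polynomial.taylorAlgHom] using this
  · rintro ⟨b, hb⟩
    refine ⟨Polynomial.taylor (-r) b, ?_⟩
    have h2 := congrArg (Polynomial.taylor (-r)) hb
    rw [Polynomial.taylor_taylor] at h2
    simp only [neg_add_cancel] at h2
    have hX' : (Polynomial.taylorAlgHom (-r) : ℂ[X] →ₐ[ℂ] ℂ[X]) X = X - C r := by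
      show Polynomial.taylor (-r) X = X - C r
      simp [Polynomial.taylorAlgHom, Polynomial.taylor_X, map_neg]; ring
    have h3 : (Polynomial.taylorAlgHom (-r) : ℂ[X] →ₐ[ℂ] ℂ[X]) (X ^ n * b)
        = (X - C r) ^ n * Polynomial.taylor (-r) b := by
      rw [map_mul, map_pow, hX']; rfl
    rw [← h3]
    show p = Polynomial.taylor (-r) (X ^ n * b)
    rw [← h2]
    simp [Polynomial.taylor_apply]


private lemma span_aux (L : ℂ[X] → ℂ)
    (hadd : ∀ p q, L (p + q) = L p + L q)
    (hsmul : ∀ (c : ℂ) p, L (C c * p) = c * L p)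
    (m : ℕ → ℂ[X]) (hm : ∀ j, (m j).Monic) (hdeg : ∀ j, (m j).natDegree = j)
    (J : ℕ) (h0 : ∀ j < J, L (m j) = 0) :
    ∀ p : ℂ[X], p.degree < J → L p = 0 := by
  have hL0 : L 0 = 0 := by simpa using hsmul 0 0
  suffices key : ∀ n : ℕ, ∀ p : ℂ[X], p.natDegree ≤ n → p.degree < J → L p = 0 by
    intro p hp; exact key p.natDegree p le_rfl hp
  intro n
  induction n using Nat.strong_induction_on with
  | _ n ih =>
    intro p hpn hpJ
    by_cases hp : p = 0
    · simpa [hp] using hL0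
    have hdJ : p.natDegree < J := by
      rw [Polynomial.degree_eq_natDegree hp] at hpJ; exact_mod_cast hpJ
    set d := p.natDegree with hd
    set q : ℂ[X] := C p.leadingCoeff * m d with hq
    have hlc : p.leadingCoeff ≠ 0 := Polynomial.leadingCoeff_ne_zero.mpr hp
    have hmdeg : (m d).degree = (d : WithBot ℕ) := by
      rw [Polynomial.degree_eq_natDegree (hm d).ne_zero, hdeg d]
    have hqdeg : p.degree = q.degree := by
      rw [hq, Polynomial.degree_C_mul hlc, hmdeg, Polynomial.degree_eq_natDegree hp]
    have hlcq : p.leadingCoeff = q.leadingCoeff := by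
      rw [hq, Polynomial.leadingCoeff_mul, Polynomial.leadingCoeff_C, (hm d).leadingCoeff,
        mul_one]
    have hsub : (p - q).degree < p.degree := Polynomial.degree_sub_lt hqdeg hp hlcq
    have hLq : L q = 0 := by
      rw [hq, hsmul, h0 d hdJ, mul_zero]
    have hLpq : L (p - q) = 0 := by
      by_cases hpq : p - q = 0
      · simpa [hpq] using hL0
      · have h1 : (p - q).natDegree < p.natDegree :=
          Polynomial.natDegree_lt_natDegree hpq hsub
        exact ih (p - q).natDegree (lt_of_lt_of_le h1 hpn) (p - q) le_rfl
          (lt_trans hsub hpJ)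
    have := hadd (p - q) q
    simpa [hLpq, hLq] using this


private lemma coprime_X_aux {Q : ℂ[X]} (h : Q.coeff 0 ≠ 0) : IsCoprime (X : ℂ[X]) Q := by
  obtain ⟨R, hR⟩ : (X : ℂ[X]) ∣ (Q - C (Q.coeff 0)) := by
    rw [Polynomial.X_dvd_iff]; simp
  refine ⟨-(C (Q.coeff 0)⁻¹) * R, C (Q.coeff 0)⁻¹, ?_⟩
  have h1 : (C (Q.coeff 0)⁻¹ : ℂ[X]) * C (Q.coeff 0) = 1 := by
    rw [← C_mul, inv_mul_cancel₀ h, C_1]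
  linear_combination (C (Q.coeff 0)⁻¹ : ℂ[X]) * hR + h1

private lemma coprime_X_sub_C_aux {a b : ℂ} (h : a ≠ b) :
    IsCoprime (X - C a : ℂ[X]) (X - C b) := by
  have hba : b - a ≠ 0 := sub_ne_zero.mpr (Ne.symm h)
  refine ⟨C (b - a)⁻¹, -(C (b - a)⁻¹), ?_⟩
  have : (C (b - a)⁻¹ : ℂ[X]) * C (b - a) = 1 := by
    rw [← C_mul, inv_mul_cancel₀ hba, C_1]
  have hC : (C (b - a) : ℂ[X]) = C b - C a := by rw [C_sub]
  linear_combination this - C (b-a)⁻¹ * hC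

private lemma laurent_dvd_aux {Q P : ℂ[X]} (hco : IsCoprime (X : ℂ[X]) Q)
    {f : LaurentPolynomial ℂ}
    (hf : Polynomial.toLaurent P = Polynomial.toLaurent Q * f) : Q ∣ P := by
  obtain ⟨n, B, hB⟩ := f.exists_T_pow
  have h1 : Polynomial.toLaurent (P * X ^ n) = Polynomial.toLaurent (Q * B) := by
    rw [map_mul, map_mul, Polynomial.toLaurent_X_pow, hf, hB]; ring
  have h2 : P * X ^ n = Q * B := Polynomial.toLaurent_injective h1
  exact (hco.symm.pow_right (n := n)).dvd_of_dvd_mul_right ⟨B, h2⟩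

private lemma geom_prod_aux {M : ℕ} (hM : 2 ≤ M) {ζ : ℂ} (hζ : IsPrimitiveRoot ζ M) :
    (∑ i ∈ range M, (X : ℂ[X]) ^ i) = ∏ i ∈ Ico 1 M, (X - C (ζ ^ i)) := by
  have hM0 : 0 < M := by omega
  have h1 : (∑ i ∈ range M, (X : ℂ[X]) ^ i) * (X - 1) = X ^ M - 1 := by
    simpa using geom_sum_mul (X : ℂ[X]) M
  have himg : (range M).image (ζ ^ ·) = Polynomial.nthRootsFinset M (1 : ℂ) := by
    apply Finset.eq_of_subset_of_card_le
    · intro x hx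
      simp only [Finset.mem_image, Finset.mem_range] at hx
      obtain ⟨i, hi, rfl⟩ := hx
      rw [Polynomial.mem_nthRootsFinset hM0]
      rw [← pow_mul, mul_comm, pow_mul, hζ.pow_eq_one, one_pow]
    · have hcard : ((range M).image (ζ ^ ·)).card = M := by
        rw [Finset.card_image_of_injOn (fun x hx y hy hxy =>
          hζ.pow_inj (Finset.mem_range.mp hx) (Finset.mem_range.mp hy) hxy),
          Finset.card_range]
      rw [hζ.card_nthRootsFinset, hcard]
  have h2 : (X : ℂ[X]) ^ M - 1 = ∏ i ∈ range M, (X - C (ζ ^ i)) := by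
    rw [X_pow_sub_one_eq_prod hM0 hζ, ← himg, Finset.prod_image]
    intro x hx y hy hxy
    exact hζ.pow_inj (Finset.mem_range.mp hx) (Finset.mem_range.mp hy) hxy
  have hsplit : range M = insert 0 (Ico 1 M) := by
    ext x; simp only [Finset.mem_range, Finset.mem_insert, Finset.mem_Ico]; omega
  rw [hsplit, Finset.prod_insert (by simp)] at h2
  simp only [pow_zero, C_1] at h2
  have hX1 : (X - 1 : ℂ[X]) ≠ 0 := Polynomial.X_sub_C_ne_zero 1
  apply mul_right_cancel₀ hX1
  rw [h1, h2]; ring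

private lemma dvd_prod_iff_aux {M J : ℕ} (hM : 2 ≤ M) {ζ : ℂ}
    (hζ : IsPrimitiveRoot ζ M) (P : ℂ[X]) :
    (∑ i ∈ range M, (X : ℂ[X]) ^ i) ^ J ∣ P ↔
      ∀ i ∈ Ico 1 M, (X - C (ζ ^ i)) ^ J ∣ P := by
  rw [geom_prod_aux hM hζ, ← Finset.prod_pow]
  constructor
  · intro h i hi; exact dvd_trans (Finset.dvd_prod_of_mem (fun i => (X - C (ζ ^ i)) ^ J) hi) h
  · intro h
    refine Finset.prod_dvd_of_coprime ?_ h
    intro x hx y hy hxy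
    have hx' := Finset.mem_Ico.mp (Finset.mem_coe.mp hx)
    have hy' := Finset.mem_Ico.mp (Finset.mem_coe.mp hy)
    have : ζ ^ x ≠ ζ ^ y := fun hc => hxy (hζ.pow_inj hx'.2 hy'.2 hc)
    exact (coprime_X_sub_C_aux this).pow

private lemma root_vanish_iff (s : Finset ℤ) (a : ℤ → ℂ) (N : ℕ)
    (hN : ∀ k ∈ s, (0:ℤ) ≤ k + N) {ω : ℂ} (hω : ω ≠ 0) (J : ℕ) :
    (∀ j < J, (Polynomial.taylor ω
        (∑ k ∈ s, C (a k) * X ^ (k + (N:ℤ)).toNat)).coeff j = 0)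
      ↔ ∀ p : ℂ[X], p.degree < (J:ℕ) →
          ∑ k ∈ s, Polynomial.eval (k:ℂ) p * (ω ^ (k:ℤ) * a k) = 0 := by
  set P : ℂ[X] := ∑ k ∈ s, C (a k) * X ^ (k + (N:ℤ)).toNat with hP
  set L : ℂ[X] → ℂ := fun p => ∑ k ∈ s, Polynomial.eval (k:ℂ) p * (ω ^ (k:ℤ) * a k) with hL
  have hadd : ∀ p q, L (p + q) = L p + L q := by
    intro p q; simp [hL, add_mul, Finset.sum_add_distrib]
  have hsmul : ∀ (c : ℂ) p, L (C c * p) = c * L p := by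
    intro c p; simp [hL, Finset.mul_sum]; apply Finset.sum_congr rfl; intros; ring
  set m : ℕ → ℂ[X] := fun j => (descPochhammer ℂ j).comp (X + C (N:ℂ)) with hm
  have hmonic : ∀ j, (m j).Monic := fun j =>
    (monic_descPochhammer ℂ j).comp_X_add_C _
  have hdeg : ∀ j, (m j).natDegree = j := fun j => by
    rw [hm]
    rw [Polynomial.natDegree_comp, descPochhammer_natDegree, Polynomial.natDegree_X_add_C, mul_one]
  have heval : ∀ (j : ℕ), ∀ k ∈ s, Polynomial.eval (k:ℂ) (m j)
      = ((j.factorial : ℂ)) * ((k + (N:ℤ)).toNat.choose j : ℂ) := by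
    intro j k hk
    have h1 : ((k + (N:ℤ)).toNat : ℤ) = k + N := Int.toNat_of_nonneg (hN k hk)
    have h2 : (((k + (N:ℤ)).toNat : ℕ) : ℂ) = (k:ℂ) + N := by
      exact_mod_cast congrArg (fun z : ℤ => (z:ℂ)) h1
    rw [hm]
    simp only [Polynomial.eval_comp, Polynomial.eval_add, Polynomial.eval_X, Polynomial.eval_C]
    rw [← h2, descPochhammer_eval_eq_descFactorial,
      Nat.descFactorial_eq_factorial_mul_choose]
    push_cast; ring
  have key : ∀ j : ℕ, (Polynomial.taylor ω P).coeff j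
      = ω ^ ((N:ℤ) - j) * ((j.factorial : ℂ))⁻¹ * L (m j) := by
    intro j
    have hLm : L (m j) = ∑ k ∈ s,
        ((j.factorial : ℂ) * ((k + (N:ℤ)).toNat.choose j : ℂ)) * (ω ^ (k:ℤ) * a k) := by
      simp only [hL]
      apply Finset.sum_congr rfl; intro k hk
      rw [heval j k hk]
    rw [hLm, hP, map_sum, Polynomial.finset_sum_coeff, Finset.mul_sum]
    apply Finset.sum_congr rfl
    intro k hk
    have h1 : ((k + (N:ℤ)).toNat : ℤ) = k + N := Int.toNat_of_nonneg (hN k hk)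
    rw [Polynomial.taylor_apply, Polynomial.mul_comp, Polynomial.C_comp,
      Polynomial.pow_comp, Polynomial.X_comp, Polynomial.coeff_C_mul,
      Polynomial.coeff_X_add_C_pow]
    by_cases hj : j ≤ (k + (N:ℤ)).toNat
    · have hz : (ω ^ ((k + (N:ℤ)).toNat - j) : ℂ) = ω ^ (((k + (N:ℤ)).toNat - j : ℕ) : ℤ) :=
        (zpow_natCast ω _).symm
      have he : (((k + (N:ℤ)).toNat - j : ℕ) : ℤ) = ((N:ℤ) - j) + k := by omega
      rw [hz, he, zpow_add₀ hω]
      have hfac : (j.factorial : ℂ) ≠ 0 := by exact_mod_cast j.factorial_ne_zero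
      field_simp
    · rw [Nat.choose_eq_zero_of_lt (by omega)]
      push_cast
      ring
  constructor
  · intro h
    apply span_aux L hadd hsmul m hmonic hdeg J
    intro j hj
    have h0 := h j hj
    rw [key j] at h0
    have hz : ω ^ ((N:ℤ) - j) ≠ 0 := zpow_ne_zero _ hω
    have hfac : ((j.factorial : ℂ))⁻¹ ≠ 0 := by
      simpa using (by exact_mod_cast j.factorial_ne_zero : (j.factorial:ℂ) ≠ 0)
    exact (mul_eq_zero.mp h0).resolve_left (mul_ne_zero hz hfac)
  · intro h j hj
    rw [key j]
    have : L (m j) = 0 := by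
      apply h
      rw [Polynomial.degree_eq_natDegree (hmonic j).ne_zero, hdeg j]
      exact_mod_cast hj
    rw [this, mul_zero]



private lemma fourier_aux {M : ℕ} (hM : 2 ≤ M) {ζ : ℂ} (hζ : IsPrimitiveRoot ζ M)
    (a : ℤ → ℂ) (ha : (Function.support a).Finite) (p : Polynomial ℂ) :
    (∀ i ∈ Finset.Ico 1 M, ∑ k ∈ ha.toFinset,
        Polynomial.eval (k:ℂ) p * ((ζ ^ i) ^ (k:ℤ) * a k) = 0)
      ↔ ∀ γ : ℤ,
        ∑ᶠ k : ℤ, Polynomial.eval ((γ:ℂ) + (M:ℂ) * (k:ℂ)) p * a (γ + (M:ℤ) * k)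
          = (M:ℂ)⁻¹ * ∑ᶠ k : ℤ, Polynomial.eval ((k:ℂ)) p * a k := by
  classical
  have hM0 : (0:ℤ) < (M:ℤ) := by exact_mod_cast (by omega : 0 < M)
  have hM2 : (2:ℤ) ≤ (M:ℤ) := by exact_mod_cast hM
  have hMC : (M:ℂ) ≠ 0 := by exact_mod_cast (by omega : M ≠ 0)
  have hζ0 : ζ ≠ 0 := hζ.ne_zero (by omega)
  set s := ha.toFinset with hs
  have hmem : ∀ k : ℤ, k ∈ s ↔ a k ≠ 0 := fun k => ha.mem_toFinset
  set B : ℕ := s.sup fun k => k.natAbs with hB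
  have hBnn : (0:ℤ) ≤ (B:ℤ) := Int.natCast_nonneg B
  have hBs : ∀ k ∈ s, -(B:ℤ) ≤ k ∧ k ≤ (B:ℤ) := by
    intro k hk
    have h1 : k.natAbs ≤ B := Finset.le_sup (f := fun k : ℤ => k.natAbs) hk
    omega
  set K : Finset ℤ := Finset.Icc (-((B:ℤ)+(M:ℤ))) ((B:ℤ)+(M:ℤ)) with hK
  set f : ℤ → ℂ := fun n => Polynomial.eval (n:ℂ) p * a n with hf
  have hfsupp : ∀ n, n ∉ s → f n = 0 := by
    intro n hn
    have : a n = 0 := by by_contra hc; exact hn ((hmem n).mpr hc)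
    simp [hf, this]
  set S : ℤ → ℂ := fun γ =>
    ∑ᶠ k : ℤ, Polynomial.eval ((γ:ℂ) + (M:ℂ)*(k:ℂ)) p * a (γ + (M:ℤ)*k) with hS
  have hMk : ∀ γ k : ℤ, 0 ≤ γ → γ < M → γ + M*k ∈ s → k ∈ K := by
    intro γ k h0 h1 hks
    obtain ⟨hl, hr⟩ := hBs _ hks
    rw [hK, Finset.mem_Icc]
    rcases le_or_gt k 0 with hk | hk
    · have h2 : (M:ℤ)*k ≤ 1*k := mul_le_mul_of_nonpos_right (by omega) hk
      constructor <;> linarith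
    · have h2 : 1*k ≤ (M:ℤ)*k := mul_le_mul_of_nonneg_right (by omega) (by omega)
      constructor <;> linarith
  have hSfin : ∀ γ : ℤ, 0 ≤ γ → γ < M → S γ = ∑ k ∈ K, f (γ + M*k) := by
    intro γ h0 h1
    have hfun : (fun k : ℤ => Polynomial.eval ((γ:ℂ) + (M:ℂ)*(k:ℂ)) p * a (γ + (M:ℤ)*k))
        = fun k : ℤ => f (γ + (M:ℤ)*k) := by
      funext k; rw [hf]; push_cast; ring_nf
    rw [hS]
    simp only [hfun]
    apply finsum_eq_sum_of_support_subset
    intro k hk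
    have hne : f (γ + M*k) ≠ 0 := hk
    have hks : γ + M*k ∈ s := by
      by_contra hc; exact hne (hfsupp _ hc)
    exact hMk γ k h0 h1 hks
  set g : ℕ × ℤ → ℤ := fun q => (q.1 : ℤ) + M * q.2 with hg
  have hginj : ∀ q1 ∈ (range M) ×ˢ K, ∀ q2 ∈ (range M) ×ˢ K, g q1 = g q2 → q1 = q2 := by
    intro q1 hq1 q2 hq2 heq
    rw [Finset.mem_product, Finset.mem_range] at hq1 hq2
    rw [hg] at heq
    simp only [] at heq
    have h2 : (M:ℤ) * (q1.2 - q2.2) = (q2.1 : ℤ) - q1.1 := by push_cast at heq ⊢; linarith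
    have hq11 : (q1.1 : ℤ) < M := by exact_mod_cast hq1.1
    have hq21 : (q2.1 : ℤ) < M := by exact_mod_cast hq2.1
    have h3 : q1.2 - q2.2 = 0 := by
      by_contra hc
      rcases lt_or_gt_of_ne hc with hlt | hgt
      · have h4 : (M:ℤ) * (q1.2 - q2.2) ≤ (M:ℤ) * (-1) :=
          mul_le_mul_of_nonneg_left (by omega) (by omega)
        have h5 : (M:ℤ) * (-1) = -(M:ℤ) := by ring
        rw [h5] at h4
        have hq1nn : (0:ℤ) ≤ (q1.1:ℤ) := Int.natCast_nonneg _
        linarith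
      · have h4 : (M:ℤ) * 1 ≤ (M:ℤ) * (q1.2 - q2.2) :=
          mul_le_mul_of_nonneg_left (by omega) (by omega)
        have h5 : (M:ℤ) * 1 = (M:ℤ) := by ring
        rw [h5] at h4
        have hq2nn : (0:ℤ) ≤ (q2.1:ℤ) := Int.natCast_nonneg _
        linarith
    have h4 : (q1.1 : ℤ) = q2.1 := by rw [h3, mul_zero] at h2; omega
    have h5 : q1.2 = q2.2 := by omega
    exact Prod.ext (by exact_mod_cast h4) h5
  set D : Finset ℤ := ((range M) ×ˢ K).image g with hD
  have hsD : s ⊆ D := by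
    intro n hn
    rw [hD, Finset.mem_image]
    have h1 : 0 ≤ n % M := Int.emod_nonneg n (by omega)
    have h2 : n % M < M := Int.emod_lt_of_pos n hM0
    have h3 : (M:ℤ) * (n / M) = n - n % M := by
      have := Int.emod_add_mul_ediv n M
      linarith
    obtain ⟨hl, hr⟩ := hBs n hn
    refine ⟨((n % M).toNat, n / (M:ℤ)), ?_, ?_⟩
    · rw [Finset.mem_product, Finset.mem_range]
      constructor
      · omega
      · rw [hK, Finset.mem_Icc]
        rcases le_or_gt (n / (M:ℤ)) 0 with hk | hk
        · have h4 : (M:ℤ)*(n/M) ≤ 1*(n/M) := mul_le_mul_of_nonpos_right (by omega) hk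
          constructor <;> linarith
        · have h4 : 1*(n/M) ≤ (M:ℤ)*(n/M) := mul_le_mul_of_nonneg_right (by omega) (by omega)
          constructor <;> linarith
    · rw [hg]
      simp only []
      have h4 : ((n % M).toNat : ℤ) = n % M := Int.toNat_of_nonneg h1
      rw [h4]
      linarith
  have hzpow : ∀ i : ℕ, ∀ γ k : ℤ, (ζ^i) ^ (γ + (M:ℤ)*k) = (ζ^i) ^ γ := by
    intro i γ k
    have hz0 : (ζ^i : ℂ) ≠ 0 := pow_ne_zero _ hζ0
    rw [zpow_add₀ hz0]
    have h1 : (ζ^i : ℂ) ^ ((M:ℤ)*k) = 1 := by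
      rw [zpow_mul]
      have h2 : (ζ^i : ℂ) ^ (M:ℤ) = 1 := by
        rw [zpow_natCast, ← pow_mul, mul_comm, pow_mul, hζ.pow_eq_one, one_pow]
      rw [h2, one_zpow]
    rw [h1, mul_one]
  have hxM1 : ∀ w : ℤ, (ζ ^ w) ^ M = 1 := by
    intro w
    rw [← zpow_natCast (ζ ^ w) M, ← zpow_mul, mul_comm w (M:ℤ), zpow_mul, zpow_natCast,
      hζ.pow_eq_one, one_zpow]
  have hkey : ∀ i : ℕ, ∑ k ∈ s, Polynomial.eval (k:ℂ) p * ((ζ ^ i) ^ (k:ℤ) * a k)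
      = ∑ γ ∈ range M, (ζ^i) ^ (γ:ℤ) * S γ := by
    intro i
    have e1 : ∑ k ∈ s, Polynomial.eval (k:ℂ) p * ((ζ ^ i) ^ (k:ℤ) * a k)
        = ∑ n ∈ s, (ζ^i) ^ (n:ℤ) * f n := by
      apply Finset.sum_congr rfl; intro k _; rw [hf]; ring
    have e2 : ∑ n ∈ s, (ζ^i) ^ (n:ℤ) * f n = ∑ n ∈ D, (ζ^i) ^ (n:ℤ) * f n := by
      apply Finset.sum_subset hsD
      intro x _ hx; rw [hfsupp x hx, mul_zero]
    have e3 : ∑ n ∈ D, (ζ^i) ^ (n:ℤ) * f n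
        = ∑ q ∈ (range M) ×ˢ K, (ζ^i) ^ (g q) * f (g q) := by
      rw [hD]; exact Finset.sum_image hginj
    have e4 : ∑ q ∈ (range M) ×ˢ K, (ζ^i) ^ (g q) * f (g q)
        = ∑ γ ∈ range M, (ζ^i) ^ (γ:ℤ) * S γ := by
      rw [Finset.sum_product]
      apply Finset.sum_congr rfl
      intro γ hγ
      rw [Finset.mem_range] at hγ
      rw [hSfin (γ:ℤ) (by omega) (by exact_mod_cast hγ), Finset.mul_sum]
      apply Finset.sum_congr rfl
      intro k _
      show (ζ^i) ^ ((γ:ℤ) + (M:ℤ)*k) * f ((γ:ℤ) + (M:ℤ)*k)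
          = (ζ^i) ^ (γ:ℤ) * f ((γ:ℤ) + (M:ℤ)*k)
      rw [hzpow i (γ:ℤ) k]
    rw [e1, e2, e3, e4]
  have hTotfin : ∑ᶠ k : ℤ, Polynomial.eval ((k:ℂ)) p * a k = ∑ n ∈ s, f n := by
    apply finsum_eq_sum_of_support_subset
    intro k hk
    have hne : f k ≠ 0 := hk
    by_contra hc; exact hne (hfsupp _ hc)
  have hTot : ∑ᶠ k : ℤ, Polynomial.eval ((k:ℂ)) p * a k = ∑ γ ∈ range M, S (γ:ℤ) := by
    rw [hTotfin]
    have h0 := hkey 0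
    simp only [pow_zero, one_zpow, one_mul] at h0
    rw [← h0]
  have hper : ∀ γ t : ℤ, S (γ + (M:ℤ)*t) = S γ := by
    intro γ t
    have hstep : ∑ᶠ k : ℤ,
          Polynomial.eval ((γ:ℂ) + (M:ℂ)*(((t + k : ℤ)):ℂ)) p * a (γ + (M:ℤ)*(t + k))
        = ∑ᶠ k : ℤ, Polynomial.eval ((γ:ℂ) + (M:ℂ)*(k:ℂ)) p * a (γ + (M:ℤ)*k) := by
      have hcomp := finsum_comp_equiv (Equiv.addLeft t)
        (f := fun k : ℤ => Polynomial.eval ((γ:ℂ) + (M:ℂ)*(k:ℂ)) p * a (γ + (M:ℤ)*k))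
      simpa using hcomp
    rw [hS]
    simp only []
    rw [← hstep]
    apply finsum_congr
    intro k
    have h1 : (γ + (M:ℤ)*t) + (M:ℤ)*k = γ + (M:ℤ)*(t + k) := by ring
    have h2 : ((↑(γ + (M:ℤ)*t):ℂ) + (M:ℂ)*(k:ℂ)) = (γ:ℂ) + (M:ℂ)*(((t + k : ℤ)):ℂ) := by
      push_cast; ring
    rw [h1, h2]
  constructor
  · intro h γ0
    have hbase : ∀ γ1 : ℤ, 0 ≤ γ1 → γ1 < M →
        S γ1 = (M:ℂ)⁻¹ * ∑ᶠ k : ℤ, Polynomial.eval ((k:ℂ)) p * a k := by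
      intro γ1 h0 h1
      have hE1 : ∑ i ∈ range M, (ζ^i) ^ (-γ1) * (∑ γ ∈ range M, (ζ^i) ^ (γ:ℤ) * S (γ:ℤ))
          = ∑ γ ∈ range M, S (γ:ℤ) := by
        have hval : ∀ i ∈ range M,
            (ζ^i) ^ (-γ1) * (∑ γ ∈ range M, (ζ^i) ^ (γ:ℤ) * S (γ:ℤ))
            = if i = 0 then ∑ γ ∈ range M, S (γ:ℤ) else 0 := by
          intro i hi
          by_cases hi0 : i = 0
          · subst hi0
            rw [if_pos rfl]
            simp
          · rw [if_neg hi0, ← hkey i,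
              h i (Finset.mem_Ico.mpr ⟨by omega, Finset.mem_range.mp hi⟩), mul_zero]
        rw [Finset.sum_congr rfl hval, Finset.sum_ite_eq' (range M) 0
          (fun _ => ∑ γ ∈ range M, S (γ:ℤ)), if_pos (Finset.mem_range.mpr (by omega))]
      have hE2 : ∑ i ∈ range M, (ζ^i) ^ (-γ1) * (∑ γ ∈ range M, (ζ^i) ^ (γ:ℤ) * S (γ:ℤ))
          = (M:ℂ) * S γ1 := by
        have e1 : ∀ i ∈ range M,
            (ζ^i) ^ (-γ1) * (∑ γ ∈ range M, (ζ^i) ^ (γ:ℤ) * S (γ:ℤ))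
            = ∑ γ ∈ range M, (ζ ^ ((γ:ℤ) - γ1)) ^ i * S (γ:ℤ) := by
          intro i _
          rw [Finset.mul_sum]
          apply Finset.sum_congr rfl
          intro γ _
          have hz0i : (ζ^i : ℂ) ≠ 0 := pow_ne_zero _ hζ0
          have e : (ζ^i : ℂ) ^ (-γ1) * (ζ^i) ^ (γ:ℤ) = (ζ ^ ((γ:ℤ) - γ1)) ^ i := by
            rw [← zpow_add₀ hz0i]
            have h1' : -γ1 + (γ:ℤ) = (γ:ℤ) - γ1 := by ring
            rw [h1', ← zpow_natCast ζ i, ← zpow_mul, mul_comm ((i:ℤ)) ((γ:ℤ) - γ1), zpow_mul,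
              zpow_natCast]
          rw [← mul_assoc, e]
        rw [Finset.sum_congr rfl e1, Finset.sum_comm]
        have e2 : ∀ γ ∈ range M, ∑ i ∈ range M, (ζ ^ ((γ:ℤ) - γ1)) ^ i * S (γ:ℤ)
            = if γ = γ1.toNat then (M:ℂ) * S γ1 else 0 := by
          intro γ hγ
          rw [Finset.mem_range] at hγ
          rw [← Finset.sum_mul]
          by_cases hcase : γ = γ1.toNat
          · rw [if_pos hcase]
            have hγγ1 : (γ:ℤ) = γ1 := by omega
            have hz1 : ζ ^ ((γ:ℤ) - γ1) = 1 := by rw [hγγ1, sub_self, zpow_zero]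
            rw [hz1, hγγ1]
            simp
          · rw [if_neg hcase]
            have hne1 : ζ ^ ((γ:ℤ) - γ1) ≠ 1 := by
              rw [Ne, hζ.zpow_eq_one_iff_dvd]
              intro hdvd
              obtain ⟨c, hc⟩ := hdvd
              have hb : -(M:ℤ) < (γ:ℤ) - γ1 := by omega
              have hb2 : (γ:ℤ) - γ1 < M := by omega
              have hc0 : c = 0 := by
                by_contra hc0
                rcases lt_or_gt_of_ne hc0 with hlt | hgt
                · have h4 : (M:ℤ) * c ≤ (M:ℤ) * (-1) :=
                    mul_le_mul_of_nonneg_left (by omega) (by omega)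
                  have h5 : (M:ℤ) * (-1) = -(M:ℤ) := by ring
                  rw [h5] at h4
                  linarith [hc ▸ hb]
                · have h4 : (M:ℤ) * 1 ≤ (M:ℤ) * c :=
                    mul_le_mul_of_nonneg_left (by omega) (by omega)
                  have h5 : (M:ℤ) * 1 = (M:ℤ) := by ring
                  rw [h5] at h4
                  linarith [hc ▸ hb2]
              rw [hc0, mul_zero] at hc
              exact hcase (by omega)
            rw [geom_aux hne1 (hxM1 _), zero_mul]
        rw [Finset.sum_congr rfl e2, Finset.sum_ite_eq' (range M) γ1.toNat
          (fun _ => (M:ℂ) * S γ1), if_pos (Finset.mem_range.mpr (by omega))]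
      have hcomb : (M:ℂ) * S γ1 = ∑ γ ∈ range M, S (γ:ℤ) := by rw [← hE2, hE1]
      rw [hTot]
      field_simp
      linear_combination hcomb
    have h1 : 0 ≤ γ0 % M := Int.emod_nonneg γ0 (by omega)
    have h2 : γ0 % M < M := Int.emod_lt_of_pos γ0 hM0
    have h3 : S γ0 = S (γ0 % M) := by
      have h4 := hper (γ0 % M) (γ0 / M)
      have h5 : γ0 % M + (M:ℤ) * (γ0 / M) = γ0 := Int.emod_add_mul_ediv γ0 M
      rw [h5] at h4
      exact h4
    show S γ0 = (M:ℂ)⁻¹ * ∑ᶠ k : ℤ, Polynomial.eval ((k:ℂ)) p * a k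
    exact h3.trans (hbase _ h1 h2)
  · intro h i hi
    rw [Finset.mem_Ico] at hi
    rw [hkey i]
    have hSall : ∀ γ ∈ range M, (ζ^i) ^ (γ:ℤ) * S (γ:ℤ)
        = (ζ^i) ^ (γ:ℤ) * ((M:ℂ)⁻¹ * ∑ᶠ k : ℤ, Polynomial.eval ((k:ℂ)) p * a k) := by
      intro γ _
      have hh : S (γ:ℤ) = (M:ℂ)⁻¹ * ∑ᶠ k : ℤ, Polynomial.eval ((k:ℂ)) p * a k := h (γ:ℤ)
      rw [hh]
    rw [Finset.sum_congr rfl hSall, ← Finset.sum_mul]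
    have hnat : ∑ γ ∈ range M, (ζ^i) ^ ((γ:ℕ):ℤ) = ∑ γ ∈ range M, (ζ^i) ^ γ := by
      apply Finset.sum_congr rfl; intro γ _; rw [zpow_natCast]
    rw [hnat, geom_aux (hζ.pow_ne_one_of_pos_of_lt (by omega) hi.2)
      (by rw [← pow_mul, mul_comm, pow_mul, hζ.pow_eq_one, one_pow]), zero_mul]

/-- The symbol `ã(z) = ∑_k a(k) z^k` of a (finitely supported) sequence, as a
Laurent polynomial. -/
noncomputable def symb (a : ℤ → ℂ) : LaurentPolynomial ℂ :=
  ∑ᶠ k : ℤ, LaurentPolynomial.C (a k) * LaurentPolynomial.T k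

theorem sum_rules_characterization (M : ℕ) (hM : 2 ≤ M) (J : ℕ) (a : ℤ → ℂ)
    (ha : (Function.support a).Finite) :
    (∃ b : LaurentPolynomial ℂ,
        symb a = (∑ i ∈ Finset.range M, LaurentPolynomial.T (i : ℤ)) ^ J * b) ↔
      (∀ p : Polynomial ℂ, p.degree < J → ∀ γ : ℤ,
        ∑ᶠ k : ℤ, Polynomial.eval ((γ : ℂ) + (M : ℂ) * (k : ℂ)) p * a (γ + (M : ℤ) * k)
          = (M : ℂ)⁻¹ * ∑ᶠ k : ℤ, Polynomial.eval (k : ℂ) p * a k) := by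
  classical
  have hMne : M ≠ 0 := by omega
  obtain ⟨ζ, hζ⟩ : ∃ ζ : ℂ, IsPrimitiveRoot ζ M :=
    ⟨_, Complex.isPrimitiveRoot_exp M hMne⟩
  have hζ0 : ζ ≠ 0 := hζ.ne_zero hMne
  set s := ha.toFinset with hs
  have hmem : ∀ k : ℤ, k ∈ s ↔ a k ≠ 0 := fun k => ha.mem_toFinset
  set B : ℕ := s.sup fun k => k.natAbs with hB
  have hBs : ∀ k ∈ s, (0:ℤ) ≤ k + (B:ℤ) := by
    intro k hk
    have h1 : k.natAbs ≤ B := Finset.le_sup (f := fun k : ℤ => k.natAbs) hk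
    omega
  set P : Polynomial ℂ :=
    ∑ k ∈ s, Polynomial.C (a k) * Polynomial.X ^ (k + (B:ℤ)).toNat with hP
  set Q : Polynomial ℂ := ∑ i ∈ Finset.range M, Polynomial.X ^ i with hQ
  have hsymb : symb a = LaurentPolynomial.T (-(B:ℤ)) * Polynomial.toLaurent P := by
    rw [symb]
    have h1 : ∑ᶠ k : ℤ, LaurentPolynomial.C (a k) * LaurentPolynomial.T k
        = ∑ k ∈ s, LaurentPolynomial.C (a k) * LaurentPolynomial.T k := by
      apply finsum_eq_sum_of_support_subset
      intro k hk
      rw [Function.mem_support] at hk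
      rw [Finset.mem_coe, hmem]
      intro hc; apply hk; rw [hc]; simp
    rw [h1, hP, map_sum, Finset.mul_sum]
    apply Finset.sum_congr rfl
    intro k hk
    rw [map_mul, Polynomial.toLaurent_C, Polynomial.toLaurent_X_pow]
    rw [mul_left_comm, ← LaurentPolynomial.T_add]
    have he : (((k + (B:ℤ)).toNat : ℕ) : ℤ) = k + B := Int.toNat_of_nonneg (hBs k hk)
    have harg : -(B:ℤ) + (((k + (B:ℤ)).toNat : ℕ) : ℤ) = k := by omega
    rw [harg]
  have hΦ : (∑ i ∈ Finset.range M, LaurentPolynomial.T (i:ℤ)) = Polynomial.toLaurent Q := by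
    rw [hQ, map_sum]
    apply Finset.sum_congr rfl
    intro i _
    rw [Polynomial.toLaurent_X_pow]
  have hQ0 : Q.coeff 0 = 1 := by
    rw [hQ, Polynomial.finset_sum_coeff]
    simp only [Polynomial.coeff_X_pow]
    rw [Finset.sum_eq_single 0]
    · simp
    · intro b _ hb; simp [Ne.symm hb]
    · intro h; exact absurd (Finset.mem_range.mpr (by omega)) h
  have hco : IsCoprime (Polynomial.X : Polynomial ℂ) Q :=
    coprime_X_aux (by rw [hQ0]; exact one_ne_zero)
  have step1 : (∃ b, symb a = (∑ i ∈ Finset.range M, LaurentPolynomial.T (i:ℤ)) ^ J * b)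
      ↔ Q ^ J ∣ P := by
    constructor
    · rintro ⟨b, hb⟩
      rw [hsymb, hΦ] at hb
      have h3 := congrArg (fun x => LaurentPolynomial.T ((B:ℤ)) * x) hb
      rw [← mul_assoc, ← LaurentPolynomial.T_add] at h3
      have h4 : (B:ℤ) + -(B:ℤ) = 0 := by ring
      rw [h4, LaurentPolynomial.T_zero, one_mul] at h3
      refine laurent_dvd_aux (hco.pow_right) (f := LaurentPolynomial.T ((B:ℤ)) * b) ?_
      rw [map_pow, h3]; ring
    · rintro ⟨b, hb⟩
      refine ⟨LaurentPolynomial.T (-(B:ℤ)) * Polynomial.toLaurent b, ?_⟩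
      rw [hsymb, hΦ, hb, map_mul, map_pow]
      ring
  have step2 := dvd_prod_iff_aux hM hζ P (J := J)
  rw [← hQ] at step2
  have step3 : (∀ i ∈ Finset.Ico 1 M, (Polynomial.X - Polynomial.C (ζ^i)) ^ J ∣ P)
      ↔ ∀ i ∈ Finset.Ico 1 M, ∀ q : Polynomial ℂ, q.degree < (J:ℕ) →
        ∑ k ∈ s, Polynomial.eval (k:ℂ) q * ((ζ^i) ^ (k:ℤ) * a k) = 0 := by
    apply forall₂_congr
    intro i hi
    exact (taylor_pow_dvd).trans (root_vanish_iff s a B hBs (pow_ne_zero _ hζ0) J)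
  rw [step1, step2, step3]
  constructor
  · intro h p hp γ
    exact (fourier_aux hM hζ a ha p).mp (fun i hi => h i hi p hp) γ
  · intro h i hi p hp
    exact (fourier_aux hM hζ a ha p).mpr (fun γ => h p hp γ) i hi
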